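/- Sufficiency of dual feasibility for collision avoidance (proposed formulation): if there exist λ ≥ 0, μ ≥ 0 with Cᵀ λ + Aᵀ μ = 0, Aᵀ μ ≠ 0, and (−λᵀ d − μᵀ b)/‖Aᵀ μ‖ ≥ d_safe, then sd(V, O) ≥ d_safe, where V = {x : C x ≤ d} and O = {x : A x ≤ b} are nonempty polyhedra. -/

import Mathlib

open Matrix

def toE (v : Fin 2 → ℝ) : EuclideanSpace ℝ (Fin 2) := WithLp.toLp 2 v

lemma inner_toE (u w : Fin 2 → ℝ) : (inner ℝ (toE u) (toE w) : ℝ) = u ⬝ᵥ w := by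
  simp [toE, PiLp.inner_apply, RCLike.inner_apply, dotProduct, mul_comm]

noncomputable def distSet (V O : Set (EuclideanSpace ℝ (Fin 2))) : ℝ :=
  sInf {r : ℝ | ∃ z : EuclideanSpace ℝ (Fin 2), r = ‖z‖ ∧
    (((fun v => v + z) '' V) ∩ O).Nonempty}

noncomputable def penSet (V O : Set (EuclideanSpace ℝ (Fin 2))) : ℝ :=
  sInf {r : ℝ | ∃ z : EuclideanSpace ℝ (Fin 2), r = ‖z‖ ∧
    ¬(((fun v => v + z) '' V) ∩ O).Nonempty}

noncomputable def sd (V O : Set (EuclideanSpace ℝ (Fin 2))) : ℝ :=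
  distSet V O - penSet V O

/-- sufficiency, proposed formulation: if there exist `λ ≥ 0`, `μ ≥ 0` with
`Cᵀλ + Aᵀμ = 0`, `Aᵀμ ≠ 0` and `(−λᵀd − μᵀb)/‖Aᵀμ‖ ≥ d_safe`, then `sd(V, O) ≥ d_safe`. -/
theorem dual_feasibility_implies_collision_avoidance_proposed {L Lm : ℕ}
    (C : Matrix (Fin L) (Fin 2) ℝ) (d : Fin L → ℝ)
    (A : Matrix (Fin Lm) (Fin 2) ℝ) (b : Fin Lm → ℝ)
    (V O : Set (EuclideanSpace ℝ (Fin 2)))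
    (hV : V = {x | ∀ i, C.mulVec (WithLp.ofLp x) i ≤ d i})
    (hO : O = {x | ∀ i, A.mulVec (WithLp.ofLp x) i ≤ b i})
    (hVne : V.Nonempty) (hOne : O.Nonempty)
    (hVc : IsCompact V) (hOc : IsCompact O)
    (dsafe : ℝ)
    (h : ∃ (lam : Fin L → ℝ) (mu : Fin Lm → ℝ),
      0 ≤ lam ∧ 0 ≤ mu ∧
      Cᵀ.mulVec lam + Aᵀ.mulVec mu = 0 ∧
      Aᵀ.mulVec mu ≠ 0 ∧
      (-(lam ⬝ᵥ d) - mu ⬝ᵥ b) / ‖toE (Aᵀ.mulVec mu)‖ ≥ dsafe) :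
    sd V O ≥ dsafe := by
  obtain ⟨lam, mu, hlam, hmu, heq, hne, hge⟩ := h
  set n : Fin 2 → ℝ := Aᵀ.mulVec mu with hn
  set N : ℝ := ‖toE n‖ with hNdef
  have hN : 0 < N := norm_pos_iff.mpr (fun h0 => hne (by simpa [toE] using congrArg WithLp.ofLp h0))
  have hK : dsafe * N ≤ -(lam ⬝ᵥ d) - mu ⬝ᵥ b := by
    rw [ge_iff_le, le_div_iff₀ hN] at hge
    linarith
  -- key separation inequality
  have key : ∀ z : EuclideanSpace ℝ (Fin 2),
      (((fun v => v + z) '' V) ∩ O).Nonempty → n ⬝ᵥ z ≤ -(dsafe * N) := by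
    intro z ⟨y, ⟨x, hxV, hxy⟩, hyO⟩
    rw [hV] at hxV; rw [hO] at hyO
    have h1 : n ⬝ᵥ y ≤ mu ⬝ᵥ b := by
      rw [hn, Matrix.mulVec_transpose, ← Matrix.dotProduct_mulVec]
      exact Finset.sum_le_sum fun i _ => mul_le_mul_of_nonneg_left (hyO i) (hmu i)
    have h2 : lam ⬝ᵥ d ≥ -(n ⬝ᵥ x) := by
      have hc : Cᵀ.mulVec lam = -n := by
        have := heq; rw [add_eq_zero_iff_eq_neg] at this; exact this
      have : lam ⬝ᵥ C.mulVec x ≤ lam ⬝ᵥ d :=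
        Finset.sum_le_sum fun i _ => mul_le_mul_of_nonneg_left (hxV i) (hlam i)
      rw [Matrix.dotProduct_mulVec, ← Matrix.mulVec_transpose, hc] at this
      simpa using this
    have hzyx : n ⬝ᵥ z = n ⬝ᵥ y - n ⬝ᵥ x := by
      have : (y : Fin 2 → ℝ) = x + z := congrArg WithLp.ofLp hxy.symm
      rw [this]
      simp [dotProduct, Finset.sum_add_distrib, mul_add]
    rw [hzyx]; linarith
  -- distSet lower bound
  have hdist : max dsafe 0 ≤ distSet V O := by
    apply le_csInf
    · obtain ⟨x, hx⟩ := hVne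
      obtain ⟨y, hy⟩ := hOne
      exact ⟨‖y - x‖, y - x, rfl, y, ⟨x, hx, by module⟩, hy⟩
    · rintro r ⟨z, rfl, hz⟩
      refine max_le ?_ (norm_nonneg _)
      have h1 := key z hz
      have h2 : |(inner ℝ (toE n) z : ℝ)| ≤ N * ‖z‖ := abs_real_inner_le_norm _ _
      have h3 : (inner ℝ (toE n) z : ℝ) = n ⬝ᵥ z := inner_toE n z.ofLp
      rw [h3] at h2
      have h4 : dsafe * N ≤ N * ‖z‖ := by
        calc dsafe * N ≤ -(n ⬝ᵥ z) := by linarith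
          _ ≤ |n ⬝ᵥ z| := neg_le_abs _
          _ ≤ N * ‖z‖ := h2
      nlinarith
  -- penSet upper bound
  have hpen : penSet V O ≤ max (-dsafe) 0 := by
    apply le_of_forall_pos_le_add
    intro ε hε
    set t : ℝ := max (-dsafe) 0 + ε with ht
    have htpos : 0 < t := by positivity
    have htd : -dsafe < t := lt_of_le_of_lt (le_max_left _ _) (lt_add_of_pos_right _ hε)
    have : t ∈ {r : ℝ | ∃ z : EuclideanSpace ℝ (Fin 2), r = ‖z‖ ∧
        ¬(((fun v => v + z) '' V) ∩ O).Nonempty} := by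
      refine ⟨(t / N) • toE n, ?_, ?_⟩
      · rw [norm_smul, Real.norm_eq_abs, abs_of_pos (div_pos htpos hN), ← hNdef]
        field_simp
      · intro hcon
        have h1 := key _ hcon
        have h2 : n ⬝ᵥ WithLp.ofLp ((t / N) • toE n) = (t / N) * (n ⬝ᵥ n) := by
          simp [dotProduct, toE, Finset.mul_sum]
          ring
        have h3 : n ⬝ᵥ n = N ^ 2 := by
          rw [← inner_toE, real_inner_self_eq_norm_sq]
        rw [h2, h3] at h1
        have : t * N ≤ -(dsafe * N) := by
          have : t / N * N ^ 2 = t * N := by field_simp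
          linarith [this ▸ h1]
        nlinarith
    calc penSet V O ≤ t := csInf_le ⟨0, by rintro r ⟨z, rfl, -⟩; exact norm_nonneg _⟩ this
      _ = max (-dsafe) 0 + ε := rfl
  rw [ge_iff_le, sd]
  rcases le_total dsafe 0 with hd | hd
  · have e1 : max dsafe 0 = 0 := max_eq_right hd
    have e2 : max (-dsafe) 0 = -dsafe := max_eq_left (by linarith)
    rw [e1] at hdist; rw [e2] at hpen; linarith
  · have e1 : max dsafe 0 = dsafe := max_eq_left hd
    have e2 : max (-dsafe) 0 = 0 := max_eq_right (by linarith)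
    rw [e1] at hdist; rw [e2] at hpen; linarith
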